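/- Let V be a finite nonempty set, d a positive integer, θ : V → ℝ^d, and q(i,j) = 1/(1 + ‖θ i − θ j‖²). Let P be a probability mass function on V × V, ξ a probability mass function on V, n a positive integer, R a partition of V whose cells all have positive ξ-probability, and R̃ ⊆ R. For r ∈ R let ξ(r) = Σ_{m∈r} ξ(m), ξ_r the conditional distribution of ξ on r, and μ_r = Σ_{m∈r} ξ_r(m) θ(m). Suppose L ≥ 0 is such that for every i ∈ V the gradient of the map y ↦ 1/(1 + ‖θ i − y‖²) on ℝ^d is Lipschitz with constant L. Then −Σ_{(i,j)} P(i,j) E_{M∼ξ^n}[ log( q(i,j)/(q(i,j) + Σ_{k=1}^{n} q(i,M_k)) ) ] ≤ −Σ_{(i,j)} P(i,j) log( q(i,j) / ( q(i,j) + n Σ_{r∈R̃} ξ(r)·(1/(1+‖θ i − μ_r‖²)) + n Σ_{r∈R∖R̃} ξ(r) Σ_{m∈r} ξ_r(m) q(i,m) ) ) + (nL/2) · Σ_{(i,j)} P(i,j) · ( Σ_{r∈R̃} ξ(r) Σ_{m∈r} ξ_r(m) ‖θ(m) − μ_r‖² ) / q(i,j). -/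

import Mathlib

set_option maxHeartbeats 1000000

open Finset

section NomadAux

lemma nomad_descent {E : Type*} [NormedAddCommGroup E] [InnerProductSpace ℝ E] [CompleteSpace E]
    {f : E → ℝ} (hf : Differentiable ℝ f) {L : ℝ}
    (hlip : ∀ a b, ‖gradient f a - gradient f b‖ ≤ L * ‖a - b‖) (x y : E) :
    f y ≤ f x + inner (𝕜 := ℝ) (gradient f x) (y - x) + L / 2 * ‖y - x‖ ^ 2 := by
  set v := y - x with hv
  have hline : ∀ t : ℝ, HasDerivAt (fun s : ℝ => x + s • v) v t := by
    intro t
    simpa using ((hasDerivAt_id t).smul_const v).const_add x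
  have hφ : ∀ t : ℝ, HasDerivAt (fun s : ℝ => f (x + s • v))
      (inner (𝕜 := ℝ) (gradient f (x + t • v)) v) t := by
    intro t
    have h1 : HasFDerivAt f
        (InnerProductSpace.toDual ℝ E (gradient f (x + t • v))) (x + t • v) :=
      hasGradientAt_iff_hasFDerivAt.mp (hf _).hasGradientAt
    simpa [Function.comp_def] using h1.comp_hasDerivAt t (hline t)
  set c : ℝ := inner (𝕜 := ℝ) (gradient f x) v with hc
  set K : ℝ := L / 2 * ‖v‖ ^ 2 with hK
  set g : ℝ → ℝ := fun s => f (x + s • v) - s * c - K * s ^ 2 with hg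
  have hg' : ∀ t : ℝ, HasDerivAt g
      (inner (𝕜 := ℝ) (gradient f (x + t • v)) v - c - K * (2 * t)) t := by
    intro t
    have h1 := ((hφ t).sub ((hasDerivAt_id t).mul_const c)).sub
      ((hasDerivAt_pow 2 t).const_mul K)
    convert h1 using 1
    · rfl
    · rfl
    · rfl
    · ring
  have hmono : AntitoneOn g (Set.Icc (0:ℝ) 1) := by
    apply antitoneOn_of_deriv_nonpos (convex_Icc 0 1)
    · exact (Differentiable.continuous (fun t => (hg' t).differentiableAt)).continuousOn
    · intro t _
      exact (hg' t).differentiableAt.differentiableWithinAt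
    · intro t ht
      rw [interior_Icc] at ht
      rw [(hg' t).deriv]
      have h1 : inner (𝕜 := ℝ) (gradient f (x + t • v)) v - c
          = inner (𝕜 := ℝ) (gradient f (x + t • v) - gradient f x) v := by
        rw [inner_sub_left]
      have h2 : inner (𝕜 := ℝ) (gradient f (x + t • v) - gradient f x) v
          ≤ L * t * ‖v‖ ^ 2 := by
        calc inner (𝕜 := ℝ) (gradient f (x + t • v) - gradient f x) v
            ≤ ‖gradient f (x + t • v) - gradient f x‖ * ‖v‖ := real_inner_le_norm _ _
          _ ≤ (L * ‖(x + t • v) - x‖) * ‖v‖ := by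
              apply mul_le_mul_of_nonneg_right (hlip _ _) (norm_nonneg _)
          _ = L * t * ‖v‖ ^ 2 := by
              rw [add_sub_cancel_left, norm_smul]
              simp [abs_of_pos ht.1]
              ring
      have h3 : K * (2 * t) = L * t * ‖v‖ ^ 2 := by rw [hK]; ring
      linarith [h1 ▸ h2]
  have h01 := hmono (Set.left_mem_Icc.mpr zero_le_one) (Set.right_mem_Icc.mpr zero_le_one)
    zero_le_one
  have hg0 : g 0 = f x := by simp [hg]
  have hg1 : g 1 = f (x + v) - c - K := by simp [hg]
  have hxy : x + v = y := by rw [hv]; abel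
  rw [hg0, hg1, hxy] at h01
  linarith

lemma nomad_diff {E : Type*} [NormedAddCommGroup E] [InnerProductSpace ℝ E] [CompleteSpace E]
    (c : E) :
    Differentiable ℝ (fun y : E => 1 / (1 + ‖c - y‖ ^ 2)) := by
  intro y
  have h1 : DifferentiableAt ℝ (fun y : E => 1 + ‖c - y‖ ^ 2) y := by
    have := ((contDiff_const (c := c)).sub contDiff_id).norm_sq (𝕜 := ℝ) (n := 1)
    exact (differentiableAt_const 1).add (this.differentiable one_ne_zero).differentiableAt
  have h2 : (1 + ‖c - y‖ ^ 2) ≠ 0 := by positivity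
  simp only [one_div]
  exact h1.inv h2

lemma nomad_sum_prod {V : Type*} [Fintype V] [DecidableEq V]
    (ξ : V → ℝ) (hξ1 : ∑ m : V, ξ m = 1) (n : ℕ) :
    ∑ M : Fin n → V, ∏ k, ξ (M k) = 1 := by
  have h := Finset.prod_univ_sum (fun _ : Fin n => (Finset.univ : Finset V))
    (fun _ v => ξ v)
  rw [Fintype.piFinset_univ] at h
  rw [← h, hξ1]
  simp

lemma nomad_marg {V : Type*} [Fintype V] [DecidableEq V]
    (ξ : V → ℝ) (hξ1 : ∑ m : V, ξ m = 1) (g : V → ℝ) (n : ℕ) :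
    ∑ M : Fin n → V, (∏ k, ξ (M k)) * (∑ k, g (M k))
      = n * ∑ m : V, ξ m * g m := by
  induction n with
  | zero => simp
  | succ n ih =>
    rw [← (Fin.consEquiv (fun _ : Fin (n+1) => V)).sum_comp]
    rw [Fintype.sum_prod_type]
    simp only [Fin.consEquiv_apply, Fin.prod_univ_succ, Fin.sum_univ_succ,
      Fin.cons_zero, Fin.cons_succ]
    have heq : ∀ v : V, ∑ M : Fin n → V,
        (ξ v * ∏ k, ξ (M k)) * (g v + ∑ k, g (M k))
        = ξ v * g v + ξ v * (n * ∑ m : V, ξ m * g m) := by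
      intro v
      have h0 : ∀ M : Fin n → V,
          (ξ v * ∏ k, ξ (M k)) * (g v + ∑ k, g (M k))
          = ξ v * g v * (∏ k, ξ (M k)) + ξ v * ((∏ k, ξ (M k)) * ∑ k, g (M k)) := by
        intro M; ring
      rw [Finset.sum_congr rfl (fun M _ => h0 M), Finset.sum_add_distrib,
        ← Finset.mul_sum, ← Finset.mul_sum, nomad_sum_prod ξ hξ1 n, ih, mul_one]
    rw [Finset.sum_congr rfl (fun v _ => heq v), Finset.sum_add_distrib,
      ← Finset.sum_mul, hξ1]
    push_cast
    ring

lemma nomad_partition {V : Type*} [Fintype V] [DecidableEq V]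
    (R : Finset (Finset V)) (hR : ∀ v : V, ∃! r, r ∈ R ∧ v ∈ r) (g : V → ℝ) :
    ∑ v : V, g v = ∑ r ∈ R, ∑ v ∈ r, g v := by
  have hdisj : (R : Set (Finset V)).PairwiseDisjoint id := by
    intro r hr s hs hrs
    simp only [Function.onFun, id]
    rw [Finset.disjoint_left]
    intro v hvr hvs
    obtain ⟨u, _, hu⟩ := hR v
    exact hrs ((hu r ⟨hr, hvr⟩).trans (hu s ⟨hs, hvs⟩).symm)
  have huniv : (Finset.univ : Finset V) = R.biUnion id := by
    ext v
    simp only [mem_univ, mem_biUnion, id, true_iff]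
    obtain ⟨r, ⟨hr, hvr⟩, -⟩ := hR v
    exact ⟨r, hr, hvr⟩
  rw [huniv, Finset.sum_biUnion hdisj]
  rfl

end NomadAux

theorem nomad_loss_approximate_upper_bound
    {V : Type*} [Fintype V] [Nonempty V] [DecidableEq V]
    (d : ℕ) (hd : 0 < d) (θ : V → EuclideanSpace ℝ (Fin d))
    (q : V → V → ℝ) (hq : ∀ i j, q i j = 1 / (1 + ‖θ i - θ j‖ ^ 2))
    (P : V × V → ℝ) (hP0 : ∀ p, 0 ≤ P p) (hP1 : ∑ p : V × V, P p = 1)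
    (ξ : V → ℝ) (hξ0 : ∀ m, 0 ≤ ξ m) (hξ1 : ∑ m : V, ξ m = 1)
    (n : ℕ) (hn : 0 < n)
    (R : Finset (Finset V)) (hR : ∀ v : V, ∃! r, r ∈ R ∧ v ∈ r)
    (hRpos : ∀ r ∈ R, 0 < ∑ m ∈ r, ξ m)
    (Rt : Finset (Finset V)) (hRt : Rt ⊆ R)
    (μ : Finset V → EuclideanSpace ℝ (Fin d))
    (hμ : ∀ r ∈ R, μ r = ∑ m ∈ r, (ξ m / ∑ m' ∈ r, ξ m') • θ m)
    (L : ℝ) (hL : 0 ≤ L)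
    (hlip : ∀ i : V, ∀ y₁ y₂ : EuclideanSpace ℝ (Fin d),
      ‖gradient (fun y => 1 / (1 + ‖θ i - y‖ ^ 2)) y₁ -
          gradient (fun y => 1 / (1 + ‖θ i - y‖ ^ 2)) y₂‖ ≤ L * ‖y₁ - y₂‖) :
    -∑ p : V × V, P p *
        ∑ M : Fin n → V, (∏ k, ξ (M k)) *
          Real.log (q p.1 p.2 / (q p.1 p.2 + ∑ k, q p.1 (M k))) ≤
    (-∑ p : V × V, P p *
        Real.log (q p.1 p.2 /
          (q p.1 p.2
            + n * ∑ r ∈ Rt, (∑ m ∈ r, ξ m) * (1 / (1 + ‖θ p.1 - μ r‖ ^ 2))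
            + n * ∑ r ∈ R \ Rt,
                (∑ m ∈ r, ξ m) * ∑ m ∈ r, (ξ m / ∑ m' ∈ r, ξ m') * q p.1 m)))
      + (n * L / 2) * ∑ p : V × V, P p *
          ((∑ r ∈ Rt, (∑ m ∈ r, ξ m) *
              ∑ m ∈ r, (ξ m / ∑ m' ∈ r, ξ m') * ‖θ m - μ r‖ ^ 2) / q p.1 p.2) := by
  have hqpos : ∀ i j, 0 < q i j := by
    intro i j; rw [hq]; positivity
  -- the second-moment error constant
  set C : ℝ := ∑ r ∈ Rt, (∑ m ∈ r, ξ m) *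
      ∑ m ∈ r, (ξ m / ∑ m' ∈ r, ξ m') * ‖θ m - μ r‖ ^ 2 with hC
  have hCalt : C = ∑ r ∈ Rt, ∑ m ∈ r, ξ m * ‖θ m - μ r‖ ^ 2 := by
    apply Finset.sum_congr rfl
    intro r hr
    have hne : (∑ m' ∈ r, ξ m') ≠ 0 := ne_of_gt (hRpos r (hRt hr))
    rw [Finset.mul_sum]
    apply Finset.sum_congr rfl
    intro m hm
    field_simp
  have hC0 : 0 ≤ C := by
    rw [hCalt]
    apply Finset.sum_nonneg
    intro r _
    exact Finset.sum_nonneg fun m _ => mul_nonneg (hξ0 m) (by positivity)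
  -- abbreviations
  set X : V → ℝ := fun i => ∑ r ∈ Rt, (∑ m ∈ r, ξ m) * (1 / (1 + ‖θ i - μ r‖ ^ 2))
    with hX
  set Y : V → ℝ := fun i => ∑ r ∈ R \ Rt,
      (∑ m ∈ r, ξ m) * ∑ m ∈ r, (ξ m / ∑ m' ∈ r, ξ m') * q i m with hY
  have hX0 : ∀ i, 0 ≤ X i := by
    intro i
    apply Finset.sum_nonneg
    intro r _
    exact mul_nonneg (Finset.sum_nonneg fun m _ => hξ0 m) (by positivity)
  have hY0 : ∀ i, 0 ≤ Y i := by
    intro i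
    apply Finset.sum_nonneg
    intro r hr
    have hne : (0:ℝ) < ∑ m' ∈ r, ξ m' := hRpos r (Finset.mem_sdiff.mp hr).1
    apply mul_nonneg hne.le
    apply Finset.sum_nonneg
    intro m _
    exact mul_nonneg (div_nonneg (hξ0 m) hne.le) (hqpos i m).le
  -- per-cell descent bound
  have cell : ∀ (i : V), ∀ r ∈ Rt,
      ∑ m ∈ r, ξ m * q i m ≤ (∑ m ∈ r, ξ m) * (1 / (1 + ‖θ i - μ r‖ ^ 2))
        + L / 2 * ∑ m ∈ r, ξ m * ‖θ m - μ r‖ ^ 2 := by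
    intro i r hr
    have hrR := hRt hr
    have hpos := hRpos r hrR
    have hne : (∑ m' ∈ r, ξ m') ≠ 0 := ne_of_gt hpos
    set f : EuclideanSpace ℝ (Fin d) → ℝ := fun y => 1 / (1 + ‖θ i - y‖ ^ 2) with hf
    have hzero : ∑ m ∈ r, ξ m • (θ m - μ r) = (0 : EuclideanSpace ℝ (Fin d)) := by
      have h1 : ∑ m ∈ r, ξ m • (θ m - μ r)
          = (∑ m ∈ r, ξ m • θ m) - (∑ m ∈ r, ξ m) • μ r := by
        simp only [smul_sub]
        rw [Finset.sum_sub_distrib, ← Finset.sum_smul]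
      rw [h1, hμ r hrR, Finset.smul_sum, sub_eq_zero]
      apply Finset.sum_congr rfl
      intro m hm
      rw [smul_smul]
      congr 1
      field_simp
    have hdes : ∀ m ∈ r, ξ m * q i m ≤ ξ m * (f (μ r)
        + inner (𝕜 := ℝ) (gradient f (μ r)) (θ m - μ r)
        + L / 2 * ‖θ m - μ r‖ ^ 2) := by
      intro m _
      apply mul_le_mul_of_nonneg_left _ (hξ0 m)
      rw [hq]
      exact nomad_descent (nomad_diff (θ i)) (hlip i) (μ r) (θ m)
    calc ∑ m ∈ r, ξ m * q i m
        ≤ ∑ m ∈ r, ξ m * (f (μ r)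
            + inner (𝕜 := ℝ) (gradient f (μ r)) (θ m - μ r)
            + L / 2 * ‖θ m - μ r‖ ^ 2) := Finset.sum_le_sum hdes
      _ = (∑ m ∈ r, ξ m) * f (μ r)
            + inner (𝕜 := ℝ) (gradient f (μ r)) (∑ m ∈ r, ξ m • (θ m - μ r))
            + L / 2 * ∑ m ∈ r, ξ m * ‖θ m - μ r‖ ^ 2 := by
          simp only [mul_add]
          rw [Finset.sum_add_distrib, Finset.sum_add_distrib, ← Finset.sum_mul,
            inner_sum, Finset.mul_sum]
          congr 1
          · congr 1
            apply Finset.sum_congr rfl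
            intro m _
            rw [real_inner_smul_right]
          · apply Finset.sum_congr rfl
            intro m _
            ring
      _ = (∑ m ∈ r, ξ m) * (1 / (1 + ‖θ i - μ r‖ ^ 2))
            + L / 2 * ∑ m ∈ r, ξ m * ‖θ m - μ r‖ ^ 2 := by
          rw [hzero, inner_zero_right, add_zero]
  -- expectation bound
  have hTB : ∀ i : V, ∑ m : V, ξ m * q i m ≤ X i + Y i + L / 2 * C := by
    intro i
    rw [nomad_partition R hR (fun m => ξ m * q i m), ← Finset.sum_sdiff hRt]
    have hYeq : ∑ r ∈ R \ Rt, ∑ m ∈ r, ξ m * q i m = Y i := by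
      apply Finset.sum_congr rfl
      intro r hr
      have hne : (∑ m' ∈ r, ξ m') ≠ 0 := ne_of_gt (hRpos r (Finset.mem_sdiff.mp hr).1)
      rw [Finset.mul_sum]
      apply Finset.sum_congr rfl
      intro m _
      field_simp
    have hXle : ∑ r ∈ Rt, ∑ m ∈ r, ξ m * q i m ≤ X i + L / 2 * C := by
      rw [hCalt, Finset.mul_sum, hX, ← Finset.sum_add_distrib]
      exact Finset.sum_le_sum fun r hr => cell i r hr
    linarith [hYeq, hXle]
  -- the key pointwise inequality
  have key : ∀ i j : V,
      -(∑ M : Fin n → V, (∏ k, ξ (M k)) *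
          Real.log (q i j / (q i j + ∑ k, q i (M k))))
      ≤ -Real.log (q i j / (q i j + n * X i + n * Y i))
        + (n * L / 2) * (C / q i j) := by
    intro i j
    set q0 : ℝ := q i j with hq0def
    have hq0 : 0 < q0 := hqpos i j
    have hS0 : ∀ M : Fin n → V, (0:ℝ) ≤ ∑ k, q i (M k) :=
      fun M => Finset.sum_nonneg fun k _ => (hqpos i (M k)).le
    have hw0 : ∀ M : Fin n → V, (0:ℝ) ≤ ∏ k, ξ (M k) :=
      fun M => Finset.prod_nonneg fun k _ => hξ0 (M k)
    -- step 1: rewrite the negative expectation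
    have step1 : -(∑ M : Fin n → V, (∏ k, ξ (M k)) *
          Real.log (q0 / (q0 + ∑ k, q i (M k))))
        = ∑ M : Fin n → V, (∏ k, ξ (M k)) *
          Real.log ((q0 + ∑ k, q i (M k)) / q0) := by
      rw [← Finset.sum_neg_distrib]
      apply Finset.sum_congr rfl
      intro M _
      rw [← mul_neg, ← Real.log_inv, inv_div]
    -- step 2: Jensen
    have step2 : ∑ M : Fin n → V, (∏ k, ξ (M k)) *
          Real.log ((q0 + ∑ k, q i (M k)) / q0)
        ≤ Real.log (∑ M : Fin n → V, (∏ k, ξ (M k)) *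
            ((q0 + ∑ k, q i (M k)) / q0)) := by
      have hj := (strictConcaveOn_log_Ioi.concaveOn).le_map_sum
        (t := Finset.univ) (w := fun M : Fin n → V => ∏ k, ξ (M k))
        (p := fun M : Fin n → V => (q0 + ∑ k, q i (M k)) / q0)
        (fun M _ => hw0 M) (nomad_sum_prod ξ hξ1 n)
        (fun M _ => Set.mem_Ioi.mpr (div_pos (by linarith [hS0 M]) hq0))
      simpa [smul_eq_mul] using hj
    -- step 3: compute the expectation of the ratio
    have step3 : ∑ M : Fin n → V, (∏ k, ξ (M k)) *
          ((q0 + ∑ k, q i (M k)) / q0)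
        = (q0 + n * ∑ m : V, ξ m * q i m) / q0 := by
      have h1 : ∀ M : Fin n → V, (∏ k, ξ (M k)) * ((q0 + ∑ k, q i (M k)) / q0)
          = ((∏ k, ξ (M k)) * q0 + (∏ k, ξ (M k)) * ∑ k, q i (M k)) / q0 := by
        intro M; ring
      rw [Finset.sum_congr rfl (fun M _ => h1 M), ← Finset.sum_div,
        Finset.sum_add_distrib, ← Finset.sum_mul, nomad_sum_prod ξ hξ1 n,
        nomad_marg ξ hξ1 (fun m => q i m) n, one_mul]
    -- step 4
    set T : ℝ := ∑ m : V, ξ m * q i m with hT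
    have hT0 : 0 ≤ T :=
      Finset.sum_nonneg fun m _ => mul_nonneg (hξ0 m) (hqpos i m).le
    set D : ℝ := q0 + n * X i + n * Y i with hD
    have hDpos : 0 < D := by
      have := hX0 i; have := hY0 i
      have hn0 : (0:ℝ) ≤ (n:ℝ) := Nat.cast_nonneg n
      nlinarith
    set ε : ℝ := (n * L / 2) * C with hε
    have hε0 : 0 ≤ ε := by
      apply mul_nonneg _ hC0
      positivity
    have hle : q0 + n * T ≤ D + ε := by
      have h := mul_le_mul_of_nonneg_left (hTB i) (Nat.cast_nonneg n : (0:ℝ) ≤ n)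
      rw [hD, hε]
      rw [hT]
      nlinarith [h]
    have step4 : Real.log ((q0 + n * T) / q0)
        ≤ -Real.log (q0 / D) + ε / q0 := by
      have hlog1 : Real.log ((q0 + n * T) / q0)
          = Real.log (q0 + n * T) - Real.log q0 :=
        Real.log_div (by positivity) (ne_of_gt hq0)
      have hlog2 : -Real.log (q0 / D) = Real.log D - Real.log q0 := by
        rw [Real.log_div (ne_of_gt hq0) (ne_of_gt hDpos)]
        ring
      have hmono : Real.log (q0 + n * T) ≤ Real.log (D + ε) :=
        Real.log_le_log (by positivity) hle
      have hshift : Real.log (D + ε) ≤ Real.log D + ε / D := by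
        have h1 : Real.log ((D + ε) / D) ≤ (D + ε) / D - 1 :=
          Real.log_le_sub_one_of_pos (div_pos (by linarith) hDpos)
        have h2 : (D + ε) / D - 1 = ε / D := by field_simp; ring
        have h3 : Real.log ((D + ε) / D) = Real.log (D + ε) - Real.log D :=
          Real.log_div (by positivity) (ne_of_gt hDpos)
        linarith [h3 ▸ (h2 ▸ h1)]
      have hdd : ε / D ≤ ε / q0 := by
        apply div_le_div_of_nonneg_left hε0 hq0
        have := hX0 i; have := hY0 i
        have hn0 : (0:ℝ) ≤ (n:ℝ) := Nat.cast_nonneg n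
        nlinarith
      linarith
    calc -(∑ M : Fin n → V, (∏ k, ξ (M k)) *
          Real.log (q0 / (q0 + ∑ k, q i (M k))))
        = ∑ M : Fin n → V, (∏ k, ξ (M k)) *
            Real.log ((q0 + ∑ k, q i (M k)) / q0) := step1
      _ ≤ Real.log (∑ M : Fin n → V, (∏ k, ξ (M k)) *
            ((q0 + ∑ k, q i (M k)) / q0)) := step2
      _ = Real.log ((q0 + n * T) / q0) := by rw [step3]
      _ ≤ -Real.log (q0 / D) + ε / q0 := step4
      _ = -Real.log (q0 / (q0 + n * X i + n * Y i)) + (n * L / 2) * (C / q0) := by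
          rw [hD, hε, mul_div_assoc]
  -- assemble
  have hsum : ∀ p : V × V,
      P p * -(∑ M : Fin n → V, (∏ k, ξ (M k)) *
          Real.log (q p.1 p.2 / (q p.1 p.2 + ∑ k, q p.1 (M k))))
      ≤ P p * (-Real.log (q p.1 p.2 / (q p.1 p.2 + n * X p.1 + n * Y p.1))
          + (n * L / 2) * (C / q p.1 p.2)) :=
    fun p => mul_le_mul_of_nonneg_left (key p.1 p.2) (hP0 p)
  calc -∑ p : V × V, P p *
        ∑ M : Fin n → V, (∏ k, ξ (M k)) *
          Real.log (q p.1 p.2 / (q p.1 p.2 + ∑ k, q p.1 (M k)))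
      = ∑ p : V × V, P p * -(∑ M : Fin n → V, (∏ k, ξ (M k)) *
          Real.log (q p.1 p.2 / (q p.1 p.2 + ∑ k, q p.1 (M k)))) := by
        rw [← Finset.sum_neg_distrib]
        exact Finset.sum_congr rfl fun p _ => (mul_neg _ _).symm
    _ ≤ ∑ p : V × V, P p * (-Real.log (q p.1 p.2 /
          (q p.1 p.2 + n * X p.1 + n * Y p.1))
          + (n * L / 2) * (C / q p.1 p.2)) :=
        Finset.sum_le_sum fun p _ => hsum p
    _ = (-∑ p : V × V, P p * Real.log (q p.1 p.2 /
          (q p.1 p.2 + n * X p.1 + n * Y p.1)))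
          + (n * L / 2) * ∑ p : V × V, P p * (C / q p.1 p.2) := by
        simp only [mul_add, Finset.sum_add_distrib]
        congr 1
        · rw [← Finset.sum_neg_distrib]
          exact Finset.sum_congr rfl fun p _ => mul_neg _ _
        · rw [Finset.mul_sum]
          exact Finset.sum_congr rfl fun p _ => by ring
    _ = _ := by rw [hX, hY, hC]
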